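/- Let A ⊆ Fin L with |A| = M be such that Y is conditionally independent of X_{Aᶜ} given X_A, let λ ≥ 0 and M ≤ N ≤ L. Then every instance-wise selection function G : (Fin L → V) → Finset (Fin L) satisfying, for each x with P(X = x) > 0, A ⊆ G(x) and |G(x)| = N, minimizes the expected objective E_X[ L_N(G(X); X) ] = ∑_{x : P(X=x)>0} P(X = x) · L_N(G(x); x) over all instance-wise selection functions G' : (Fin L → V) → Finset (Fin L), and the minimum value is 0. -/
import Mathlib


open scoped Classical
open Finset

/-- Probability of an event under a (finite) probability mass `P`. -/
noncomputable def pr {Ω : Type*} [Fintype Ω] (P : Ω → ℝ) (E : Ω → Prop) : ℝ :=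
  ∑ ω, if E ω then P ω else 0

/-- Conditional probability `P(E | C)`. -/
noncomputable def condPr {Ω : Type*} [Fintype Ω] (P : Ω → ℝ) (E C : Ω → Prop) : ℝ :=
  pr P (fun ω => E ω ∧ C ω) / pr P C

/-- The event `{X_F = x_F}`, i.e. `X ω` agrees with `x` on the index set `F`. -/
def evSel {Ω V : Type*} {L : ℕ} (X : Ω → Fin L → V) (F : Finset (Fin L))
    (x : Fin L → V) : Ω → Prop :=
  fun ω => ∀ i ∈ F, X ω i = x i

/-- Kullback–Leibler divergence between two pmfs on a finite type. -/
noncomputable def klDiv {𝒴 : Type*} [Fintype 𝒴] (p q : 𝒴 → ℝ) : ℝ :=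
  ∑ y, p y * Real.log (p y / q y)

/-- The conditional distribution `P(Y = · | C)`. -/
noncomputable def condDist {Ω 𝒴 : Type*} [Fintype Ω] (P : Ω → ℝ) (Y : Ω → 𝒴)
    (C : Ω → Prop) : 𝒴 → ℝ :=
  fun y => condPr P (fun ω => Y ω = y) C

/-- Per-instance INVASE objective
`L_N(F; x) = KL(P(Y = · | X = x) ‖ P(Y = · | X_F = x_F)) + λ·| |F| − N |`. -/
noncomputable def invaseObj {Ω V 𝒴 : Type*} [Fintype Ω] [Fintype 𝒴] {L : ℕ}
    (P : Ω → ℝ) (X : Ω → Fin L → V) (Y : Ω → 𝒴) (lam : ℝ) (N : ℕ)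
    (F : Finset (Fin L)) (x : Fin L → V) : ℝ :=
  klDiv (condDist P Y (fun ω => X ω = x)) (condDist P Y (evSel X F x))
    + lam * |(F.card : ℝ) - (N : ℝ)|

/-- Expected INVASE objective `E_X[L_N(G(X); X)]` of an instance-wise selection
function `G`, summing over the instances `x` with `P(X = x) > 0`. -/
noncomputable def expObj {Ω V 𝒴 : Type*} [Fintype Ω] [Fintype V] [Fintype 𝒴] {L : ℕ}
    (P : Ω → ℝ) (X : Ω → Fin L → V) (Y : Ω → 𝒴) (lam : ℝ) (N : ℕ)
    (G : (Fin L → V) → Finset (Fin L)) : ℝ :=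
  ∑ x ∈ Finset.univ.filter (fun x : Fin L → V => 0 < pr P (fun ω => X ω = x)),
    pr P (fun ω => X ω = x) * invaseObj P X Y lam N (G x) x

section Aux
variable {Ω : Type*} [Fintype Ω] (P : Ω → ℝ)

lemma pr_nonneg (hP : ∀ ω, 0 ≤ P ω) (E : Ω → Prop) : 0 ≤ pr P E :=
  Finset.sum_nonneg fun ω _ => by by_cases h : E ω <;> simp [pr, h, hP ω]

lemma pr_mono (hP : ∀ ω, 0 ≤ P ω) {E E' : Ω → Prop} (h : ∀ ω, E ω → E' ω) :
    pr P E ≤ pr P E' := by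
  refine Finset.sum_le_sum fun ω _ => ?_
  by_cases hE : E ω
  · simp [hE, h ω hE]
  · by_cases hE' : E' ω <;> simp [hE, hE', hP ω]

lemma pr_congr {E E' : Ω → Prop} (h : ∀ ω, E ω ↔ E' ω) : pr P E = pr P E' := by
  unfold pr; exact Finset.sum_congr rfl fun ω _ => by rw [if_congr (h ω) rfl rfl]

lemma pr_false : pr P (fun _ => False) = 0 := by simp [pr]

lemma pr_eq_sum_fiber {β : Type*} [Fintype β] (f : Ω → β) (E : Ω → Prop) :
    pr P E = ∑ b : β, pr P (fun ω => E ω ∧ f ω = b) := by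
  unfold pr
  rw [Finset.sum_comm]
  refine Finset.sum_congr rfl fun ω _ => ?_
  by_cases hE : E ω
  · simp [hE, Finset.sum_ite_eq' Finset.univ (f ω)]
  · simp [hE]

lemma condDist_sum_one {𝒴 : Type*} [Fintype 𝒴] (Y : Ω → 𝒴) (C : Ω → Prop)
    (hC : 0 < pr P C) : ∑ y, condDist P Y C y = 1 := by
  unfold condDist condPr
  rw [← Finset.sum_div]
  rw [show ∑ y, pr P (fun ω => Y ω = y ∧ C ω) = pr P C from ?_]
  · field_simp
  · rw [pr_eq_sum_fiber P Y C]
    exact Finset.sum_congr rfl fun y _ => pr_congr P fun ω => and_comm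

lemma condDist_nonneg {𝒴 : Type*} [Fintype 𝒴] (hP : ∀ ω, 0 ≤ P ω) (Y : Ω → 𝒴)
    (C : Ω → Prop) (y : 𝒴) : 0 ≤ condDist P Y C y :=
  div_nonneg (pr_nonneg P hP _) (pr_nonneg P hP _)

end Aux

lemma klDiv_self_eq_zero {𝒴 : Type*} [Fintype 𝒴] (p : 𝒴 → ℝ) : klDiv p p = 0 := by
  unfold klDiv
  refine Finset.sum_eq_zero fun y _ => ?_
  by_cases h : p y = 0 <;> simp [h]

lemma klDiv_nonneg {𝒴 : Type*} [Fintype 𝒴] (p q : 𝒴 → ℝ)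
    (hp : ∀ y, 0 ≤ p y) (hq : ∀ y, 0 ≤ q y)
    (hps : ∑ y, p y = 1) (hqs : ∑ y, q y = 1)
    (hac : ∀ y, q y = 0 → p y = 0) : 0 ≤ klDiv p q := by
  have key : ∀ y, p y - q y ≤ p y * Real.log (p y / q y) := by
    intro y
    rcases eq_or_lt_of_le (hp y) with h0 | hpos
    · rw [← h0]; simpa using hq y
    · have hqpos : 0 < q y := by
        rcases eq_or_lt_of_le (hq y) with h0' | h'
        · exact absurd (hac y h0'.symm) (by positivity)
        · exact h'
      have hlog : Real.log (q y / p y) ≤ q y / p y - 1 :=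
        Real.log_le_sub_one_of_pos (by positivity)
      have : 1 - q y / p y ≤ Real.log (p y / q y) := by
        rw [show Real.log (p y / q y) = - Real.log (q y / p y) by
          rw [← Real.log_inv]; congr 1; field_simp]
        linarith
      calc p y - q y = p y * (1 - q y / p y) := by field_simp
        _ ≤ p y * Real.log (p y / q y) :=
            mul_le_mul_of_nonneg_left this (le_of_lt hpos)
  calc (0:ℝ) = ∑ y, p y - ∑ y, q y := by rw [hps, hqs]; ring
    _ = ∑ y, (p y - q y) := by rw [Finset.sum_sub_distrib]
    _ ≤ ∑ y, p y * Real.log (p y / q y) := Finset.sum_le_sum fun y _ => key y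
    _ = klDiv p q := rfl

lemma condDist_eqF {Ω V 𝒴 : Type*} [Fintype Ω] [Fintype V] [Fintype 𝒴] {L : ℕ}
    (P : Ω → ℝ) (hP : ∀ ω, 0 ≤ P ω) (X : Ω → Fin L → V) (Y : Ω → 𝒴)
    (A F : Finset (Fin L)) (hAF : A ⊆ F)
    (hCI : ∀ (x : Fin L → V) (y : 𝒴), 0 < pr P (evSel X A x) →
      pr P (fun ω => Y ω = y ∧ X ω = x) * pr P (evSel X A x)
        = pr P (fun ω => Y ω = y ∧ evSel X A x ω) * pr P (fun ω => X ω = x))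
    (x : Fin L → V) (hx : 0 < pr P (fun ω => X ω = x)) :
    condDist P Y (fun ω => X ω = x) = condDist P Y (evSel X F x) := by
  have hA : 0 < pr P (evSel X A x) :=
    lt_of_lt_of_le hx (pr_mono P hP fun ω h i _ => by rw [h])
  have hF : 0 < pr P (evSel X F x) :=
    lt_of_lt_of_le hx (pr_mono P hP fun ω h i _ => by rw [h])
  funext y
  have key : pr P (fun ω => Y ω = y ∧ evSel X F x ω) * pr P (evSel X A x)
      = pr P (fun ω => Y ω = y ∧ evSel X A x ω) * pr P (evSel X F x) := by
    rw [pr_eq_sum_fiber P X (fun ω => Y ω = y ∧ evSel X F x ω),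
        pr_eq_sum_fiber P X (evSel X F x), Finset.sum_mul, Finset.mul_sum]
    refine Finset.sum_congr rfl fun x' _ => ?_
    by_cases hx' : ∀ i ∈ F, x' i = x i
    · have e1 : pr P (fun ω => (Y ω = y ∧ evSel X F x ω) ∧ X ω = x')
          = pr P (fun ω => Y ω = y ∧ X ω = x') := by
        refine pr_congr P fun ω => ?_
        constructor
        · rintro ⟨⟨hY, _⟩, hX⟩; exact ⟨hY, hX⟩
        · rintro ⟨hY, hX⟩; exact ⟨⟨hY, fun i hi => by rw [hX]; exact hx' i hi⟩, hX⟩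
      have e2 : pr P (fun ω => evSel X F x ω ∧ X ω = x')
          = pr P (fun ω => X ω = x') := by
        refine pr_congr P fun ω => ?_
        constructor
        · rintro ⟨_, hX⟩; exact hX
        · intro hX; exact ⟨fun i hi => by rw [hX]; exact hx' i hi, hX⟩
      have eA : ∀ ω, evSel X A x' ω ↔ evSel X A x ω := fun ω =>
        ⟨fun h i hi => by rw [h i hi, hx' i (hAF hi)],
         fun h i hi => by rw [h i hi, hx' i (hAF hi)]⟩
      have hA' : 0 < pr P (evSel X A x') := by rwa [pr_congr P eA]
      have := hCI x' y hA'
      rw [pr_congr P eA, pr_congr P (fun ω => and_congr_right fun _ => eA ω)] at this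
      rw [e1, e2, this]
    · have e1 : pr P (fun ω => (Y ω = y ∧ evSel X F x ω) ∧ X ω = x') = 0 := by
        rw [pr_congr P (E' := fun _ => False), pr_false]
        intro ω
        simp only [iff_false]
        rintro ⟨⟨_, hev⟩, hX⟩
        exact hx' fun i hi => by rw [← hX]; exact hev i hi
      have e2 : pr P (fun ω => evSel X F x ω ∧ X ω = x') = 0 := by
        rw [pr_congr P (E' := fun _ => False), pr_false]
        intro ω
        simp only [iff_false]
        rintro ⟨hev, hX⟩
        exact hx' fun i hi => by rw [← hX]; exact hev i hi
      rw [e1, e2]; ring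
  have keyx := hCI x y hA
  show condPr P _ _ = condPr P _ _
  unfold condPr
  rw [div_eq_div_iff (ne_of_gt hx) (ne_of_gt hF)]
  have h1 : pr P (fun ω => Y ω = y ∧ X ω = x) * pr P (evSel X F x) * pr P (evSel X A x)
      = pr P (fun ω => Y ω = y ∧ evSel X F x ω) * pr P (fun ω => X ω = x)
        * pr P (evSel X A x) := by
    calc pr P (fun ω => Y ω = y ∧ X ω = x) * pr P (evSel X F x) * pr P (evSel X A x)
        = (pr P (fun ω => Y ω = y ∧ X ω = x) * pr P (evSel X A x)) * pr P (evSel X F x) := by ring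
      _ = (pr P (fun ω => Y ω = y ∧ evSel X A x ω) * pr P (fun ω => X ω = x)) * pr P (evSel X F x) := by rw [keyx]
      _ = (pr P (fun ω => Y ω = y ∧ evSel X A x ω) * pr P (evSel X F x)) * pr P (fun ω => X ω = x) := by ring
      _ = (pr P (fun ω => Y ω = y ∧ evSel X F x ω) * pr P (evSel X A x)) * pr P (fun ω => X ω = x) := by rw [key]
      _ = pr P (fun ω => Y ω = y ∧ evSel X F x ω) * pr P (fun ω => X ω = x) * pr P (evSel X A x) := by ring
  exact mul_right_cancel₀ (ne_of_gt hA) h1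


/-- Any instance-wise selection function `G` with `A ⊆ G(x)` and `|G(x)| = N` at every
`x` with `P(X = x) > 0` minimizes the expected INVASE objective over all instance-wise
selection functions, and the minimum value is `0`. -/
theorem stmt3 {Ω V 𝒴 : Type*} [Fintype Ω] [Fintype V] [Fintype 𝒴] {L M N : ℕ}
    (X : Ω → Fin L → V) (Y : Ω → 𝒴) (P : Ω → ℝ)
    (hP : ∀ ω, 0 ≤ P ω) (hPsum : ∑ ω, P ω = 1)
    (A : Finset (Fin L)) (hAcard : A.card = M)
    (hCI : ∀ (x : Fin L → V) (y : 𝒴), 0 < pr P (evSel X A x) →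
      pr P (fun ω => Y ω = y ∧ X ω = x) * pr P (evSel X A x)
        = pr P (fun ω => Y ω = y ∧ evSel X A x ω) * pr P (fun ω => X ω = x))
    (lam : ℝ) (hlam : 0 ≤ lam) (hMN : M ≤ N) (hNL : N ≤ L)
    (G : (Fin L → V) → Finset (Fin L))
    (hG : ∀ x : Fin L → V, 0 < pr P (fun ω => X ω = x) → A ⊆ G x ∧ (G x).card = N) :
    (∀ G' : (Fin L → V) → Finset (Fin L),
        expObj P X Y lam N G ≤ expObj P X Y lam N G') ∧
      expObj P X Y lam N G = 0 := by
  have hzero : expObj P X Y lam N G = 0 := by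
    refine Finset.sum_eq_zero fun x hx => ?_
    rw [Finset.mem_filter] at hx
    obtain ⟨hsub, hcard⟩ := hG x hx.2
    have hcd := condDist_eqF P hP X Y A (G x) hsub hCI x hx.2
    rw [invaseObj, ← hcd, klDiv_self_eq_zero, hcard]
    simp
  refine ⟨fun G' => ?_, hzero⟩
  rw [hzero]
  refine Finset.sum_nonneg fun x hx => ?_
  rw [Finset.mem_filter] at hx
  have hxpos := hx.2
  have hF : 0 < pr P (evSel X (G' x) x) :=
    lt_of_lt_of_le hxpos (pr_mono P hP fun ω h i _ => by rw [h])
  refine mul_nonneg (le_of_lt hxpos) (add_nonneg ?_ (mul_nonneg hlam (abs_nonneg _)))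
  refine klDiv_nonneg _ _ (condDist_nonneg P hP Y _) (condDist_nonneg P hP Y _)
    (condDist_sum_one P Y _ hxpos) (condDist_sum_one P Y _ hF) ?_
  intro y hy
  have hnum : pr P (fun ω => Y ω = y ∧ evSel X (G' x) x ω) = 0 := by
    have := hy
    unfold condDist condPr at this
    exact (div_eq_zero_iff.mp this).resolve_right (ne_of_gt hF)
  have h1 : pr P (fun ω => Y ω = y ∧ X ω = x) = 0 := by
    have hle : pr P (fun ω => Y ω = y ∧ X ω = x)
        ≤ pr P (fun ω => Y ω = y ∧ evSel X (G' x) x ω) :=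
      pr_mono P hP fun ω h => ⟨h.1, fun i _ => by rw [h.2]⟩
    exact le_antisymm (hnum ▸ hle) (pr_nonneg P hP _)
  unfold condDist condPr
  rw [h1, zero_div]
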